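/- The trapezium T = {(−1,1), (1,1), (−2,0), (2,0)} and kite K = {(−2,0), (−1,1), (−1,−1), (2,0)} in ℝ² have equal multisets of pairwise distances {2, √2, √2, √10, √10, 4} but are not isometric; in particular AMD₁(T) = √2 while AMD₁(K) = (3√2 + √10)/4. -/

import Mathlib

open Metric Set

/-- The `k`-th nearest neighbour distance from `p` to the set `X` (excluding `p` itself). -/
noncomputable def kthNNDist {E : Type*} [MetricSpace E] (X : Set E) (p : E) (k : ℕ) : ℝ :=
  sInf {r : ℝ | k ≤ Nat.card ↥((X \ {p}) ∩ Metric.closedBall p r)}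

noncomputable def pt (x y : ℝ) : EuclideanSpace ℝ (Fin 2) := WithLp.toLp 2 ![x, y]

/-- The trapezium `T = {(−1,1), (1,1), (−2,0), (2,0)}`. -/
noncomputable def Tset : Set (EuclideanSpace ℝ (Fin 2)) :=
  {pt (-1) 1, pt 1 1, pt (-2) 0, pt 2 0}

/-- The kite `K = {(−2,0), (−1,1), (−1,−1), (2,0)}`. -/
noncomputable def Kset : Set (EuclideanSpace ℝ (Fin 2)) :=
  {pt (-2) 0, pt (-1) 1, pt (-1) (-1), pt 2 0}

lemma dist_pt (a b c d : ℝ) : dist (pt a b) (pt c d) = Real.sqrt ((a-c)^2+(b-d)^2) := by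
  rw [EuclideanSpace.dist_eq, Fin.sum_univ_two]
  simp [pt, Real.dist_eq, sq_abs]

lemma sqrt4 : Real.sqrt 4 = 2 := by
  rw [show (4:ℝ) = 2^2 by norm_num, Real.sqrt_sq (by norm_num)]
lemma sqrt16 : Real.sqrt 16 = 4 := by
  rw [show (16:ℝ) = 4^2 by norm_num, Real.sqrt_sq (by norm_num)]

lemma dAB : dist (pt (-1) 1) (pt 1 1) = 2 := by rw [dist_pt]; norm_num [sqrt4]
lemma dAC : dist (pt (-1) 1) (pt (-2) 0) = Real.sqrt 2 := by rw [dist_pt]; norm_num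
lemma dAD : dist (pt (-1) 1) (pt 2 0) = Real.sqrt 10 := by rw [dist_pt]; norm_num
lemma dBC : dist (pt 1 1) (pt (-2) 0) = Real.sqrt 10 := by rw [dist_pt]; norm_num
lemma dBD : dist (pt 1 1) (pt 2 0) = Real.sqrt 2 := by rw [dist_pt]; norm_num
lemma dCD : dist (pt (-2) 0) (pt 2 0) = 4 := by rw [dist_pt]; norm_num [sqrt16]
lemma dCE : dist (pt (-2) 0) (pt (-1) (-1)) = Real.sqrt 2 := by rw [dist_pt]; norm_num
lemma dAE : dist (pt (-1) 1) (pt (-1) (-1)) = 2 := by rw [dist_pt]; norm_num [sqrt4]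
lemma dED : dist (pt (-1) (-1)) (pt 2 0) = Real.sqrt 10 := by rw [dist_pt]; norm_num

lemma dBA : dist (pt 1 1) (pt (-1) 1) = 2 := by rw [dist_comm]; exact dAB
lemma dCA : dist (pt (-2) 0) (pt (-1) 1) = Real.sqrt 2 := by rw [dist_comm]; exact dAC
lemma dDA : dist (pt 2 0) (pt (-1) 1) = Real.sqrt 10 := by rw [dist_comm]; exact dAD
lemma dCB : dist (pt (-2) 0) (pt 1 1) = Real.sqrt 10 := by rw [dist_comm]; exact dBC
lemma dDB : dist (pt 2 0) (pt 1 1) = Real.sqrt 2 := by rw [dist_comm]; exact dBD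
lemma dDC : dist (pt 2 0) (pt (-2) 0) = 4 := by rw [dist_comm]; exact dCD
lemma dEC : dist (pt (-1) (-1)) (pt (-2) 0) = Real.sqrt 2 := by rw [dist_comm]; exact dCE
lemma dEA : dist (pt (-1) (-1)) (pt (-1) 1) = 2 := by rw [dist_comm]; exact dAE
lemma dDE : dist (pt 2 0) (pt (-1) (-1)) = Real.sqrt 10 := by rw [dist_comm]; exact dED

lemma s2_pos : (0:ℝ) < Real.sqrt 2 := Real.sqrt_pos.2 (by norm_num)
lemma s10_pos : (0:ℝ) < Real.sqrt 10 := Real.sqrt_pos.2 (by norm_num)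
lemma s2_lt_2 : Real.sqrt 2 < 2 := (Real.sqrt_lt' (by norm_num)).2 (by norm_num)
lemma s2_lt_s10 : Real.sqrt 2 < Real.sqrt 10 :=
  Real.sqrt_lt_sqrt (by norm_num) (by norm_num)
lemma s10_lt_4 : Real.sqrt 10 < 4 := (Real.sqrt_lt' (by norm_num)).2 (by norm_num)
lemma s2_lt_4 : Real.sqrt 2 < 4 := s2_lt_s10.trans s10_lt_4

lemma kth_eq {E : Type*} [MetricSpace E] {X : Set E} (hX : X.Finite) {p q : E} {d : ℝ}
    (hq : q ∈ X) (hqp : q ≠ p) (hd : dist q p = d)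
    (hmin : ∀ x ∈ X, x ≠ p → d ≤ dist x p) :
    kthNNDist X p 1 = d := by
  have hset : {r : ℝ | 1 ≤ Nat.card ↥((X \ {p}) ∩ Metric.closedBall p r)} = Set.Ici d := by
    ext r
    simp only [Set.mem_setOf_eq, Set.mem_Ici]
    constructor
    · intro h
      have hne : ((X \ {p}) ∩ Metric.closedBall p r).Nonempty := by
        by_contra hcon
        rw [Set.not_nonempty_iff_eq_empty] at hcon
        simp [hcon] at h
      obtain ⟨x, ⟨hxX, hxp⟩, hxb⟩ := hne
      calc d ≤ dist x p := hmin x hxX (by simpa using hxp)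
        _ ≤ r := by simpa [Metric.mem_closedBall] using hxb
    · intro h
      have hmem : q ∈ (X \ {p}) ∩ Metric.closedBall p r :=
        ⟨⟨hq, by simpa using hqp⟩, by simp [Metric.mem_closedBall, hd, h]⟩
      have hfin : ((X \ {p}) ∩ Metric.closedBall p r).Finite :=
        hX.diff.inter_of_left _
      have : Finite ↥((X \ {p}) ∩ Metric.closedBall p r) := hfin
      have : Nonempty ↥((X \ {p}) ∩ Metric.closedBall p r) := ⟨⟨q, hmem⟩⟩
      exact Nat.card_pos
  rw [kthNNDist, hset, csInf_Ici]

lemma Tfin : Tset.Finite :=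
  (Set.finite_singleton _).insert _ |>.insert _ |>.insert _
lemma Kfin : Kset.Finite :=
  (Set.finite_singleton _).insert _ |>.insert _ |>.insert _

lemma ne_of_dist {p q : EuclideanSpace ℝ (Fin 2)} {d : ℝ} (h : dist p q = d) (hd : 0 < d) :
    p ≠ q := by
  intro he; rw [he, dist_self] at h; exact absurd h.symm (ne_of_gt hd)

/-- The trapezium `T` and the kite `K` have the same multiset of six pairwise distances
`{2, √2, √2, √10, √10, 4}` but are not isometric; in particular `AMD₁(T) = √2` while
`AMD₁(K) = (3√2 + √10)/4`, where `AMD₁` averages nearest-neighbour distances. -/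
theorem trapezium_kite :
    ({dist (pt (-1) 1) (pt 1 1), dist (pt (-1) 1) (pt (-2) 0), dist (pt (-1) 1) (pt 2 0),
      dist (pt 1 1) (pt (-2) 0), dist (pt 1 1) (pt 2 0), dist (pt (-2) 0) (pt 2 0)} :
        Multiset ℝ) =
      ({2, Real.sqrt 2, Real.sqrt 2, Real.sqrt 10, Real.sqrt 10, 4} : Multiset ℝ) ∧
    ({dist (pt (-2) 0) (pt (-1) 1), dist (pt (-2) 0) (pt (-1) (-1)), dist (pt (-2) 0) (pt 2 0),
      dist (pt (-1) 1) (pt (-1) (-1)), dist (pt (-1) 1) (pt 2 0), dist (pt (-1) (-1)) (pt 2 0)} :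
        Multiset ℝ) =
      ({2, Real.sqrt 2, Real.sqrt 2, Real.sqrt 10, Real.sqrt 10, 4} : Multiset ℝ) ∧
    (¬ ∃ f : EuclideanSpace ℝ (Fin 2) → EuclideanSpace ℝ (Fin 2),
      Isometry f ∧ f '' Tset = Kset) ∧
    (kthNNDist Tset (pt (-1) 1) 1 + kthNNDist Tset (pt 1 1) 1 +
      kthNNDist Tset (pt (-2) 0) 1 + kthNNDist Tset (pt 2 0) 1) / 4 = Real.sqrt 2 ∧
    (kthNNDist Kset (pt (-2) 0) 1 + kthNNDist Kset (pt (-1) 1) 1 +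
      kthNNDist Kset (pt (-1) (-1)) 1 + kthNNDist Kset (pt 2 0) 1) / 4 =
      (3 * Real.sqrt 2 + Real.sqrt 10) / 4 := by
  have hs2ne0 : Real.sqrt 2 ≠ 0 := ne_of_gt s2_pos
  have hs2ne2 : Real.sqrt 2 ≠ 2 := ne_of_lt s2_lt_2
  have hs2ne10 : Real.sqrt 2 ≠ Real.sqrt 10 := ne_of_lt s2_lt_s10
  have hs2ne4 : Real.sqrt 2 ≠ 4 := ne_of_lt s2_lt_4
  have hAE : pt (-1) 1 ≠ pt (-1) (-1) := ne_of_dist dAE (by norm_num)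
  refine ⟨?_, ?_, ?_, ?_, ?_⟩
  · rw [dAB, dAC, dAD, dBC, dBD, dCD]
    have : ({Real.sqrt 10, Real.sqrt 10, Real.sqrt 2, 4} : Multiset ℝ)
        = ({Real.sqrt 2, Real.sqrt 10, Real.sqrt 10, 4} : Multiset ℝ) := by
      rw [show ({Real.sqrt 10, Real.sqrt 2, (4:ℝ)} : Multiset ℝ)
          = ({Real.sqrt 2, Real.sqrt 10, (4:ℝ)} : Multiset ℝ) from Multiset.cons_swap _ _ _]
      exact Multiset.cons_swap _ _ _
    simpa using congrArg (fun s => (2:ℝ) ::ₘ Real.sqrt 2 ::ₘ s) this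
  · rw [dCA, dCE, dCD, dAE, dAD, dED]
    refine Multiset.ext.2 fun a => ?_
    simp only [Multiset.insert_eq_cons, Multiset.count_cons, Multiset.count_singleton]
    ring
  · rintro ⟨f, hf, him⟩
    have hmemK : ∀ z ∈ Kset, ∃ x ∈ Tset, f x = z := by
      intro z hz; rw [← him] at hz; exact hz
    obtain ⟨a, haT, hfa⟩ := hmemK (pt (-2) 0) (by simp [Kset])
    obtain ⟨b, hbT, hfb⟩ := hmemK (pt (-1) 1) (by simp [Kset, Set.mem_insert_iff])
    obtain ⟨c, hcT, hfc⟩ := hmemK (pt (-1) (-1)) (by simp [Kset, Set.mem_insert_iff])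
    have hbc : b ≠ c := by
      intro h; rw [h, hfc] at hfb; exact hAE hfb.symm
    have hdab : dist a b = Real.sqrt 2 := by
      rw [← hf.dist_eq a b, hfa, hfb, dCA]
    have hdac : dist a c = Real.sqrt 2 := by
      rw [← hf.dist_eq a c, hfa, hfc, dCE]
    clear hfa hfb hfc hf him hmemK
    simp only [Tset, Set.mem_insert_iff, Set.mem_singleton_iff] at haT hbT hcT
    rcases haT with rfl | rfl | rfl | rfl <;> rcases hbT with rfl | rfl | rfl | rfl <;>
      rcases hcT with rfl | rfl | rfl | rfl <;>
      simp only [dAB, dAC, dAD, dBC, dBD, dCD, dBA, dCA, dDA, dCB, dDB, dDC,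
        dist_self] at hdab hdac <;>
      first
        | exact hbc rfl
        | exact hs2ne0 hdab.symm
        | exact hs2ne2 hdab.symm
        | exact hs2ne4 hdab.symm
        | exact hs2ne10 hdab.symm
        | exact hs2ne0 hdac.symm
        | exact hs2ne2 hdac.symm
        | exact hs2ne4 hdac.symm
        | exact hs2ne10 hdac.symm
  · have memA : pt (-1) 1 ∈ Tset := by simp [Tset]
    have memB : pt 1 1 ∈ Tset := by simp [Tset, Set.mem_insert_iff]
    have memC : pt (-2) 0 ∈ Tset := by simp [Tset, Set.mem_insert_iff]
    have memD : pt 2 0 ∈ Tset := by simp [Tset, Set.mem_insert_iff]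
    have hmem : ∀ x ∈ Tset, x = pt (-1) 1 ∨ x = pt 1 1 ∨ x = pt (-2) 0 ∨ x = pt 2 0 := by
      intro x hx
      simpa [Tset, Set.mem_insert_iff] using hx
    have t1 : kthNNDist Tset (pt (-1) 1) 1 = Real.sqrt 2 := by
      refine kth_eq Tfin memC (ne_of_dist dCA s2_pos) dCA ?_
      intro x hx hxp
      rcases hmem x hx with rfl | rfl | rfl | rfl
      · exact absurd rfl hxp
      · rw [dBA]; exact s2_lt_2.le
      · exact dCA.ge
      · rw [dDA]; exact s2_lt_s10.le
    have t2 : kthNNDist Tset (pt 1 1) 1 = Real.sqrt 2 := by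
      refine kth_eq Tfin memD (ne_of_dist dDB s2_pos) dDB ?_
      intro x hx hxp
      rcases hmem x hx with rfl | rfl | rfl | rfl
      · rw [dAB]; exact s2_lt_2.le
      · exact absurd rfl hxp
      · rw [dCB]; exact s2_lt_s10.le
      · exact dDB.ge
    have t3 : kthNNDist Tset (pt (-2) 0) 1 = Real.sqrt 2 := by
      refine kth_eq Tfin memA (ne_of_dist dAC s2_pos) dAC ?_
      intro x hx hxp
      rcases hmem x hx with rfl | rfl | rfl | rfl
      · exact dAC.ge
      · rw [dBC]; exact s2_lt_s10.le
      · exact absurd rfl hxp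
      · rw [dDC]; exact s2_lt_4.le
    have t4 : kthNNDist Tset (pt 2 0) 1 = Real.sqrt 2 := by
      refine kth_eq Tfin memB (ne_of_dist dBD s2_pos) dBD ?_
      intro x hx hxp
      rcases hmem x hx with rfl | rfl | rfl | rfl
      · rw [dAD]; exact s2_lt_s10.le
      · exact dBD.ge
      · rw [dCD]; exact s2_lt_4.le
      · exact absurd rfl hxp
    rw [t1, t2, t3, t4]; ring
  · have memC : pt (-2) 0 ∈ Kset := by simp [Kset]
    have memA : pt (-1) 1 ∈ Kset := by simp [Kset, Set.mem_insert_iff]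
    have memE : pt (-1) (-1) ∈ Kset := by simp [Kset, Set.mem_insert_iff]
    have memD : pt 2 0 ∈ Kset := by simp [Kset, Set.mem_insert_iff]
    have hmem : ∀ x ∈ Kset, x = pt (-2) 0 ∨ x = pt (-1) 1 ∨ x = pt (-1) (-1) ∨ x = pt 2 0 := by
      intro x hx
      simpa [Kset, Set.mem_insert_iff] using hx
    have k1 : kthNNDist Kset (pt (-2) 0) 1 = Real.sqrt 2 := by
      refine kth_eq Kfin memA (ne_of_dist dAC s2_pos) dAC ?_
      intro x hx hxp
      rcases hmem x hx with rfl | rfl | rfl | rfl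
      · exact absurd rfl hxp
      · exact dAC.ge
      · exact dEC.ge
      · rw [dDC]; exact s2_lt_4.le
    have k2 : kthNNDist Kset (pt (-1) 1) 1 = Real.sqrt 2 := by
      refine kth_eq Kfin memC (ne_of_dist dCA s2_pos) dCA ?_
      intro x hx hxp
      rcases hmem x hx with rfl | rfl | rfl | rfl
      · exact dCA.ge
      · exact absurd rfl hxp
      · rw [dEA]; exact s2_lt_2.le
      · rw [dDA]; exact s2_lt_s10.le
    have k3 : kthNNDist Kset (pt (-1) (-1)) 1 = Real.sqrt 2 := by
      refine kth_eq Kfin memC (ne_of_dist dCE s2_pos) dCE ?_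
      intro x hx hxp
      rcases hmem x hx with rfl | rfl | rfl | rfl
      · exact dCE.ge
      · rw [dAE]; exact s2_lt_2.le
      · exact absurd rfl hxp
      · rw [dDE]; exact s2_lt_s10.le
    have k4 : kthNNDist Kset (pt 2 0) 1 = Real.sqrt 10 := by
      refine kth_eq Kfin memA (ne_of_dist dAD s10_pos) dAD ?_
      intro x hx hxp
      rcases hmem x hx with rfl | rfl | rfl | rfl
      · rw [dCD]; exact s10_lt_4.le
      · exact dAD.ge
      · exact dED.ge
      · exact absurd rfl hxp
    rw [k1, k2, k3, k4]; ring
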